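/- Let n ∈ ℕ and let A = (a_{ij}) ∈ Mₙ(ℝ) be a (strictly) diagonally dominant matrix with negative diagonal entries, i.e., a_{ii} < 0 and |a_{ii}| > r_i(A) = Σ_{j≠i}|a_{ij}| for all i = 1,…,n. Then for every multi-index α̂ ∈ (0,1]ⁿ, the α̂-order spectrum of A lies in the open left half-plane: σ_{α̂}(A) ⊆ ℂ₋ = { z ∈ ℂ : Re z < 0 }. -/

import Mathlib

/-- The matrix `diag(z^{α₁},…,z^{αₙ}) - M`, with complex powers in the principal branch
(`Complex.cpow`, whose argument lies in `(-π, π]`). -/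
noncomputable def fracMat {n : ℕ} (α : Fin n → ℝ) (M : Matrix (Fin n) (Fin n) ℂ) (z : ℂ) :
    Matrix (Fin n) (Fin n) ℂ :=
  Matrix.diagonal (fun i => z ^ (α i : ℂ)) - M

/-- The `α`-order spectrum of a (complex) matrix `M`. -/
noncomputable def fracSpec {n : ℕ} (α : Fin n → ℝ) (M : Matrix (Fin n) (Fin n) ℂ) : Set ℂ :=
  {z : ℂ | (fracMat α M z).det = 0}

/-- If `Re z ≥ 0` and `a ∈ (0, 1]`, then `Re (z ^ a) ≥ 0` (principal branch). -/
lemma cpow_re_nonneg {z : ℂ} (hz : 0 ≤ z.re) {a : ℝ} (ha : a ∈ Set.Ioc (0:ℝ) 1) :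
    0 ≤ (z ^ (a : ℂ)).re := by
  rw [Complex.cpow_ofReal_re]
  apply mul_nonneg (Real.rpow_nonneg (norm_nonneg z) a)
  apply Real.cos_nonneg_of_mem_Icc
  have harg : |z.arg| ≤ Real.pi / 2 := Complex.abs_arg_le_pi_div_two_iff.mpr hz
  have : |z.arg * a| ≤ Real.pi / 2 := by
    rw [abs_mul, abs_of_pos ha.1]
    calc |z.arg| * a ≤ (Real.pi / 2) * 1 :=
      mul_le_mul harg ha.2 ha.1.le (by positivity)
    _ = Real.pi / 2 := mul_one _
  constructor
  · linarith [neg_abs_le (z.arg * a)]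
  · linarith [le_abs_self (z.arg * a)]

/-- if `A` is strictly diagonally dominant with negative diagonal entries,
then for every multi-index `α̂ ∈ (0,1]ⁿ` the `α̂`-order spectrum of `A` lies in the open left
half-plane. -/
theorem fracSpec_subset_left_halfplane_of_diagonally_dominant
    {n : ℕ} (A : Matrix (Fin n) (Fin n) ℝ)
    (hdiag : ∀ i, A i i < 0)
    (hdom : ∀ i, (∑ j ∈ Finset.univ.erase i, |A i j|) < |A i i|)
    (α : Fin n → ℝ) (hα : ∀ i, α i ∈ Set.Ioc (0 : ℝ) 1) :
    fracSpec α (A.map (fun a => (a : ℂ))) ⊆ {z : ℂ | z.re < 0} := by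
  intro z hz
  by_contra hre
  simp only [Set.mem_setOf_eq, not_lt] at hre
  apply det_ne_zero_of_sum_row_lt_diag (A := fracMat α (A.map (fun a => (a : ℂ))) z) ?_ hz
  intro k
  have hoff : ∀ j ∈ Finset.univ.erase k,
      ‖fracMat α (A.map (fun a => (a : ℂ))) z k j‖ = |A k j| := by
    intro j hj
    have hjk : j ≠ k := Finset.ne_of_mem_erase hj
    simp [fracMat, Matrix.diagonal, hjk.symm, Complex.norm_real]
  rw [Finset.sum_congr rfl hoff]
  refine lt_of_lt_of_le (hdom k) ?_
  have hd : fracMat α (A.map (fun a => (a : ℂ))) z k k = z ^ (α k : ℂ) - (A k k : ℂ) := by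
    simp [fracMat, Matrix.diagonal]
  rw [hd]
  calc |A k k| = -(A k k) := abs_of_neg (hdiag k)
  _ ≤ (z ^ (α k : ℂ)).re - A k k := by
      linarith [cpow_re_nonneg hre (hα k)]
  _ = (z ^ (α k : ℂ) - (A k k : ℂ)).re := by simp
  _ ≤ ‖z ^ (α k : ℂ) - (A k k : ℂ)‖ := Complex.re_le_norm _
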